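/- Let V = diag(Cⱼ) + b·μμᵀ be a block matrix, where each block Cⱼ = diag(μⱼₖ) + c·μⱼμⱼᵀ with μⱼ the vector of positive entries μⱼₖ, b ≥ 0, c ≥ 0, and μ the concatenation of the μⱼ. Set uⱼ = sⱼ/(1+c·sⱼ) with sⱼ = Σₖ μⱼₖ and aⱼ = (1/(1+c·sⱼ)) 1_{nⱼ}. Then V⁻¹ = diag(Cⱼ⁻¹) − (b/(1 + b·Σⱼ uⱼ)) a aᵀ, where a is the concatenation of the aⱼ. -/

import Mathlib

open Matrix Finset

private lemma sigma_sum' {J : ℕ} {n : Fin J → ℕ} (f : (Σ j : Fin J, Fin (n j)) → ℝ) :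
    ∑ i : (Σ j : Fin J, Fin (n j)), f i = ∑ j, ∑ k, f ⟨j, k⟩ := by
  rw [← Finset.univ_sigma_univ, Finset.sum_sigma]

set_option maxHeartbeats 2000000 in
theorem inv_block_compound_symmetry {J : ℕ} (n : Fin J → ℕ)
    (μ : (Σ j : Fin J, Fin (n j)) → ℝ) (b c : ℝ)
    (hμ : ∀ i, 0 < μ i) (hb : 0 ≤ b) (hc : 0 ≤ c) :
    letI s : Fin J → ℝ := fun j => ∑ k, μ ⟨j, k⟩
    letI u : Fin J → ℝ := fun j => s j / (1 + c * s j)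
    letI a : (Σ j : Fin J, Fin (n j)) → ℝ := fun i => (1 + c * s i.1)⁻¹
    letI V : Matrix (Σ j : Fin J, Fin (n j)) (Σ j : Fin J, Fin (n j)) ℝ :=
      Matrix.of fun i i' =>
        (if i = i' then μ i else 0) + (if i.1 = i'.1 then c * μ i * μ i' else 0)
          + b * μ i * μ i'
    V⁻¹ = Matrix.of fun i i' =>
        ((if i = i' then (μ i)⁻¹ else 0) - (if i.1 = i'.1 then c / (1 + c * s i.1) else 0))
          - (b / (1 + b * ∑ j, u j)) * a i * a i' := by
  set s : Fin J → ℝ := fun j => ∑ k, μ ⟨j, k⟩ with hs_def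
  set u : Fin J → ℝ := fun j => s j / (1 + c * s j) with hu_def
  set a : (Σ j : Fin J, Fin (n j)) → ℝ := fun i => (1 + c * s i.1)⁻¹ with ha_def
  have hs' : ∀ j : Fin J, ∑ k : Fin (n j), μ ⟨j, k⟩ = s j := fun _ => rfl
  have hu' : ∀ j : Fin J, u j = s j / (1 + c * s j) := fun _ => rfl
  have ha' : ∀ i : (Σ j : Fin J, Fin (n j)), a i = (1 + c * s i.1)⁻¹ := fun _ => rfl
  clear_value a u s
  clear hs_def hu_def ha_def
  have hμne : ∀ i : (Σ j : Fin J, Fin (n j)), μ i ≠ 0 := fun i => (hμ i).ne'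
  have hs0 : ∀ j, 0 ≤ s j := fun j => by
    rw [← hs']; exact Finset.sum_nonneg fun k _ => (hμ _).le
  have hcs : ∀ j, (0:ℝ) < 1 + c * s j := fun j => by nlinarith [mul_nonneg hc (hs0 j)]
  have hU : (0:ℝ) < 1 + b * Finset.univ.sum u := by
    have h1 : (0:ℝ) ≤ Finset.univ.sum u := Finset.sum_nonneg fun j _ => by
      rw [hu']; exact div_nonneg (hs0 j) (hcs j).le
    nlinarith [mul_nonneg hb h1]
  apply Matrix.inv_eq_right_inv
  ext ⟨j, k⟩ ⟨j'', k''⟩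
  rw [Matrix.mul_apply, Matrix.one_apply]
  simp only [Matrix.of_apply]
  set β : ℝ := b / (1 + b * Finset.univ.sum u) with hβ_def
  clear_value β
  set F : (Σ j : Fin J, Fin (n j)) → ℝ := fun x =>
    ((if x = ⟨j'', k''⟩ then (μ x)⁻¹ else 0) - if x.fst = j'' then c / (1 + c * s x.fst) else 0)
      - β * a x * a ⟨j'', k''⟩ with hF_def
  have hF : ∀ x : (Σ j : Fin J, Fin (n j)),
      (((if x = ⟨j'', k''⟩ then (μ x)⁻¹ else 0) - if x.fst = j'' then c / (1 + c * s x.fst) else 0)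
        - β * a x * a ⟨j'', k''⟩) = F x := fun _ => rfl
  simp only [hF]
  -- the sum of μ * F over one block
  have block : ∀ j' : Fin J, ∑ k' : Fin (n j'), μ ⟨j', k'⟩ * F ⟨j', k'⟩
      = (if j' = j'' then (1 + c * s j')⁻¹ else 0) - β * u j' * (1 + c * s j'')⁻¹ := by
    intro j'
    by_cases hj : j' = j''
    · subst hj
      simp only [hF_def, ha', Sigma.mk.inj_iff, heq_eq_eq, true_and, if_true]
      have pt : ∀ k' : Fin (n j'), μ ⟨j', k'⟩ *
          (((if k' = k'' then (μ ⟨j', k'⟩)⁻¹ else 0) - c / (1 + c * s j'))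
            - β * (1 + c * s j')⁻¹ * (1 + c * s j')⁻¹)
          = (if k' = k'' then 1 else 0) - (μ ⟨j', k'⟩ * (c / (1 + c * s j')
              + β * (1 + c * s j')⁻¹ * (1 + c * s j')⁻¹)) := by
        intro k'
        split_ifs with h
        · rw [mul_sub, mul_sub, mul_inv_cancel₀ (hμne _)]; ring
        · ring
      simp only [pt]
      rw [Finset.sum_sub_distrib, Finset.sum_ite_eq', ← Finset.sum_mul, hs']
      simp only [Finset.mem_univ, if_true]
      rw [hu']
      field_simp [(hcs j').ne']
      have hD : (1 + s j' * c) ≠ 0 := by rw [mul_comm]; exact (hcs j').ne'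
      field_simp
      ring
    · have pt : ∀ k' : Fin (n j'), μ ⟨j', k'⟩ * F ⟨j', k'⟩
          = μ ⟨j', k'⟩ * (-(β * (1 + c * s j')⁻¹ * (1 + c * s j'')⁻¹)) := by
        intro k'
        simp only [hF_def, ha', Sigma.mk.inj_iff, hj, false_and, if_false]
        ring
      simp only [pt]
      rw [← Finset.sum_mul, hs']
      simp only [hj, if_false]
      rw [hu']
      field_simp [(hcs j').ne', (hcs j'').ne']
      ring
  have tot : ∑ x : (Σ j : Fin J, Fin (n j)), μ x * F x
      = (1 - β * Finset.univ.sum u) * (1 + c * s j'')⁻¹ := by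
    rw [sigma_sum' (fun x => μ x * F x)]
    simp only [block]
    rw [Finset.sum_sub_distrib, Finset.sum_ite_eq']
    have h2 : ∑ j' : Fin J, β * u j' * (1 + c * s j'')⁻¹
        = β * Finset.univ.sum u * (1 + c * s j'')⁻¹ := by
      rw [← Finset.sum_mul, ← Finset.mul_sum]
    rw [h2]
    simp only [Finset.mem_univ, if_true]
    ring
  have expand : ∀ x : (Σ j : Fin J, Fin (n j)),
      (((if ⟨j, k⟩ = x then μ ⟨j, k⟩ else 0) + if j = x.fst then c * μ ⟨j, k⟩ * μ x else 0)
        + b * μ ⟨j, k⟩ * μ x) * F x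
      = (if ⟨j, k⟩ = x then μ ⟨j, k⟩ * F x else 0)
        + ((if j = x.fst then c * μ ⟨j, k⟩ * (μ x * F x) else 0)
          + b * μ ⟨j, k⟩ * (μ x * F x)) := by
    intro x
    split_ifs <;> ring
  simp only [expand]
  rw [Finset.sum_add_distrib, Finset.sum_ite_eq, Finset.sum_add_distrib, ← Finset.mul_sum, tot]
  have S2 : ∑ x : (Σ j : Fin J, Fin (n j)), (if j = x.fst then c * μ ⟨j, k⟩ * (μ x * F x) else 0)
      = c * μ ⟨j, k⟩ * ((if j = j'' then (1 + c * s j)⁻¹ else 0) - β * u j * (1 + c * s j'')⁻¹) := by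
    rw [sigma_sum' (fun x => if j = x.fst then c * μ ⟨j, k⟩ * (μ x * F x) else 0)]
    have pull : ∀ j' : Fin J, ∑ k' : Fin (n j'), (if j = j' then c * μ ⟨j, k⟩ * (μ ⟨j', k'⟩ * F ⟨j', k'⟩) else 0)
        = if j = j' then c * μ ⟨j, k⟩ * ∑ k' : Fin (n j'), μ ⟨j', k'⟩ * F ⟨j', k'⟩ else 0 := by
      intro j'
      split_ifs with h
      · rw [Finset.mul_sum]
      · simp
    simp only [pull]
    rw [Finset.sum_ite_eq]
    simp only [Finset.mem_univ, if_true, block]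
  rw [S2]
  simp only [Finset.mem_univ, if_true]
  have hFjk : F ⟨j, k⟩ = (if (⟨j, k⟩ : Σ j : Fin J, Fin (n j)) = ⟨j'', k''⟩ then (μ ⟨j, k⟩)⁻¹ else 0)
      - (if j = j'' then c / (1 + c * s j) else 0) - β * (1 + c * s j)⁻¹ * (1 + c * s j'')⁻¹ := by
    rw [hF_def]; simp only [ha']
  rw [hFjk]
  have hβD : β * (1 + b * Finset.univ.sum u) = b := by
    rw [hβ_def]; exact div_mul_cancel₀ b hU.ne'
  have hm : μ ⟨j, k⟩ * (μ ⟨j, k⟩)⁻¹ = 1 := mul_inv_cancel₀ (hμne _)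
  have hd : (1 + c * s j) * (1 + c * s j)⁻¹ = 1 := mul_inv_cancel₀ (hcs j).ne'
  by_cases hjj : j = j''
  · subst hjj
    by_cases hkk : k = k''
    · subst hkk
      simp only [eq_self_iff_true, if_true]
      rw [hu']
      linear_combination hm - μ ⟨j, k⟩ * β * (1 + c * s j)⁻¹ * hd
        - μ ⟨j, k⟩ * (1 + c * s j)⁻¹ * hβD
    · simp only [Sigma.mk.inj_iff, heq_eq_eq, hkk, and_false, eq_self_iff_true, true_and, if_true, if_false]
      rw [hu']
      linear_combination (-(μ ⟨j, k⟩ * β * (1 + c * s j)⁻¹)) * hd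
        - μ ⟨j, k⟩ * (1 + c * s j)⁻¹ * hβD
  · simp only [Sigma.mk.inj_iff, hjj, false_and, if_false]
    rw [hu']
    linear_combination (-(μ ⟨j, k⟩ * β * (1 + c * s j'')⁻¹)) * hd
      - μ ⟨j, k⟩ * (1 + c * s j'')⁻¹ * hβD
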